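/- Let d ≥ 1, θ* ∈ ℝ^d, and let W₀ ∈ ℝ^{d×d} be symmetric positive definite. On a probability space (Ω, F, P), let (η_i)_{i≥1} be i.i.d. real random variables with E[η_i] = 0 and E[η_i²] = σ², and let F_s = σ(η₁,…,η_s). Fix l ≥ 1 and set t = l·d. Suppose the actions x₁,…,x_t ∈ ℝ^d are random vectors such that, for every batch k ∈ {1,…,l}, the d vectors x_{(k−1)d+1},…,x_{kd} almost surely form an orthonormal basis of ℝ^d and each of them is F_{(k−1)d}-measurable. Let X_t ∈ ℝ^{t×d} have rows x₁,…,x_t, let Y_t = X_t θ* + (η₁,…,η_t)ᵀ, let W_t = W₀ + X_tᵀX_t, and let θ̂_t = W_t⁻¹X_tᵀY_t. Then E[‖θ̂_t − θ*‖₂²] ≤ (d²/t²)·θ*ᵀW₀²θ* + (d²/t)·σ². In particular E[‖θ̂_t − θ*‖₂²] ≤ (d²/t)σ²(1+o(1)) as t → ∞. -/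

import Mathlib

open MeasureTheory ProbabilityTheory Matrix

section Aux

theorem stmt1_dot_self_trans {d : ℕ} (A : Matrix (Fin d) (Fin d) ℝ) (v : Fin d → ℝ) :
    (A *ᵥ v) ⬝ᵥ (A *ᵥ v) = v ⬝ᵥ ((Aᵀ * A) *ᵥ v) := by
  rw [← mulVec_mulVec, dotProduct_mulVec v, vecMul_transpose]

theorem stmt1_hop {d l : ℕ} (hl : 1 ≤ l) {W : Matrix (Fin d) (Fin d) ℝ}
    (hlow : ∀ u : Fin d → ℝ, (l:ℝ) * (u ⬝ᵥ u) ≤ u ⬝ᵥ (W *ᵥ u))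
    (hdet : IsUnit W.det)
    (v : Fin d → ℝ) :
    (l:ℝ)^2 * ((W⁻¹ *ᵥ v) ⬝ᵥ (W⁻¹ *ᵥ v)) ≤ v ⬝ᵥ v := by
  set u := W⁻¹ *ᵥ v with hu
  have hv : W *ᵥ u = v := by
    rw [hu, mulVec_mulVec, Matrix.mul_nonsing_inv W hdet, one_mulVec]
  have huu : (0:ℝ) ≤ u ⬝ᵥ u := Finset.sum_nonneg fun i _ => mul_self_nonneg _
  have hcs : (u ⬝ᵥ (W *ᵥ u))^2 ≤ (u ⬝ᵥ u) * ((W *ᵥ u) ⬝ᵥ (W *ᵥ u)) := by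
    have := Finset.sum_mul_sq_le_sq_mul_sq Finset.univ u (W *ᵥ u)
    simpa [dotProduct, sq] using this
  have hlo := hlow u
  have hlnn : (0:ℝ) ≤ (l:ℝ) * (u ⬝ᵥ u) := by positivity
  have hsq : ((l:ℝ) * (u ⬝ᵥ u))^2 ≤ (u ⬝ᵥ u) * (v ⬝ᵥ v) := by
    calc ((l:ℝ) * (u ⬝ᵥ u))^2 ≤ (u ⬝ᵥ (W *ᵥ u))^2 := by
          apply pow_le_pow_left₀ hlnn hlo
      _ ≤ (u ⬝ᵥ u) * ((W *ᵥ u) ⬝ᵥ (W *ᵥ u)) := hcs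
      _ = (u ⬝ᵥ u) * (v ⬝ᵥ v) := by rw [hv]
  rcases eq_or_lt_of_le huu with h0 | hpos
  · have hu0 : u = 0 := dotProduct_self_eq_zero.mp h0.symm
    rw [hu0]
    simp only [dotProduct_zero, mul_zero]
    exact Finset.sum_nonneg fun i _ => mul_self_nonneg _
  · nlinarith [hpos, hsq]

theorem stmt1_sum_range_mul {M : Type*} [AddCommMonoid M] (f : ℕ → M) (l d : ℕ) :
    ∑ i ∈ Finset.range (l * d), f i
      = ∑ k ∈ Finset.range l, ∑ j ∈ Finset.range d, f (k * d + j) := by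
  induction l with
  | zero => simp
  | succ n ih =>
      rw [Nat.succ_mul, Finset.sum_range_add, ih, Finset.sum_range_succ]

theorem stmt1_batch_sum {d : ℕ} (y : Fin d → Fin d → ℝ)
    (h : ∀ j j' : Fin d, y j ⬝ᵥ y j' = if j = j' then (1:ℝ) else 0)
    (a b : Fin d) :
    ∑ j : Fin d, y j a * y j b = if a = b then (1:ℝ) else 0 := by
  have h1 : (Matrix.of y) * (Matrix.of y)ᵀ = 1 := by
    ext j j'
    simpa [Matrix.mul_apply, Matrix.one_apply, dotProduct] using h j j'
  have h2 : (Matrix.of y)ᵀ * (Matrix.of y) = 1 := mul_eq_one_comm.mp h1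
  have h3 := congrFun (congrFun h2 a) b
  simpa [Matrix.mul_apply, Matrix.one_apply] using h3

noncomputable def stmt1Q {d : ℕ} (M : Matrix (Fin d) (Fin d) ℝ) (p q : Fin d → ℝ) : ℝ :=
  ∑ a : Fin d, ∑ b : Fin d, p a * M a b * q b

namespace stmt1Q

variable {d : ℕ} (M : Matrix (Fin d) (Fin d) ℝ)

theorem eq' (p q : Fin d → ℝ) : p ⬝ᵥ (M *ᵥ q) = stmt1Q M p q := by
  simp [stmt1Q, dotProduct, mulVec, Finset.mul_sum, mul_assoc]

theorem sub_sub (p q r s : Fin d → ℝ) :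
    stmt1Q M (p - q) (r - s)
      = stmt1Q M p r - stmt1Q M p s - stmt1Q M q r + stmt1Q M q s := by
  simp only [stmt1Q, Pi.sub_apply, ← Finset.sum_sub_distrib, ← Finset.sum_add_distrib]
  exact Finset.sum_congr rfl fun a _ => Finset.sum_congr rfl fun b _ => by ring

theorem add_left (p q r : Fin d → ℝ) :
    stmt1Q M (fun a => p a + q a) r = stmt1Q M p r + stmt1Q M q r := by
  simp only [stmt1Q, ← Finset.sum_add_distrib]
  exact Finset.sum_congr rfl fun a _ => Finset.sum_congr rfl fun b _ => by ring

theorem smul_left (c : ℝ) (p r : Fin d → ℝ) :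
    stmt1Q M (fun a => c * p a) r = c * stmt1Q M p r := by
  simp only [stmt1Q, Finset.mul_sum]
  exact Finset.sum_congr rfl fun a _ => Finset.sum_congr rfl fun b _ => by ring

theorem add_right (p q r : Fin d → ℝ) :
    stmt1Q M r (fun a => p a + q a) = stmt1Q M r p + stmt1Q M r q := by
  simp only [stmt1Q, ← Finset.sum_add_distrib]
  exact Finset.sum_congr rfl fun a _ => Finset.sum_congr rfl fun b _ => by ring

theorem smul_right (c : ℝ) (p r : Fin d → ℝ) :
    stmt1Q M r (fun a => c * p a) = c * stmt1Q M r p := by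
  simp only [stmt1Q, Finset.mul_sum]
  exact Finset.sum_congr rfl fun a _ => Finset.sum_congr rfl fun b _ => by ring

theorem sum_left (t : ℕ) (c : ℕ → ℝ) (u : ℕ → Fin d → ℝ) (q : Fin d → ℝ) :
    stmt1Q M (fun a => ∑ i ∈ Finset.range t, c i * u i a) q
      = ∑ i ∈ Finset.range t, c i * stmt1Q M (u i) q := by
  induction t with
  | zero => simp [stmt1Q]
  | succ n ih =>
      simp only [Finset.sum_range_succ]
      rw [← ih, ← smul_left, ← add_left]

theorem sum_right (t : ℕ) (c : ℕ → ℝ) (u : ℕ → Fin d → ℝ) (q : Fin d → ℝ) :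
    stmt1Q M q (fun a => ∑ i ∈ Finset.range t, c i * u i a)
      = ∑ i ∈ Finset.range t, c i * stmt1Q M q (u i) := by
  induction t with
  | zero => simp [stmt1Q]
  | succ n ih =>
      simp only [Finset.sum_range_succ]
      rw [← ih, ← smul_right, ← add_right]

theorem measurable {Ω : Type*} {m' : MeasurableSpace Ω}
    {f g : Ω → Fin d → ℝ} (hf : Measurable[m'] f) (hg : Measurable[m'] g) :
    Measurable[m'] (fun ω => stmt1Q M (f ω) (g ω)) := by
  simp only [stmt1Q]
  refine Finset.measurable_sum _ fun a _ => Finset.measurable_sum _ fun b _ => ?_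
  exact (((measurable_pi_apply a).comp hf).mul measurable_const).mul
    ((measurable_pi_apply b).comp hg)

theorem abs_le {p q : Fin d → ℝ} {cp cq : ℝ} (hcp : 0 ≤ cp) (hcq : 0 ≤ cq)
    (hp : ∀ a, |p a| ≤ cp) (hq : ∀ a, |q a| ≤ cq) :
    |stmt1Q M p q| ≤ cp * cq * ∑ a : Fin d, ∑ b : Fin d, |M a b| := by
  have h1 : |stmt1Q M p q| ≤ ∑ a : Fin d, ∑ b : Fin d, |p a * M a b * q b| := by
    refine (Finset.abs_sum_le_sum_abs _ _).trans ?_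
    exact Finset.sum_le_sum fun a _ => Finset.abs_sum_le_sum_abs _ _
  refine h1.trans ?_
  rw [Finset.mul_sum]
  refine Finset.sum_le_sum fun a _ => ?_
  rw [Finset.mul_sum]
  refine Finset.sum_le_sum fun b _ => ?_
  rw [abs_mul, abs_mul]
  calc |p a| * |M a b| * |q b| ≤ cp * |M a b| * cq := by
        apply mul_le_mul (mul_le_mul_of_nonneg_right (hp a) (abs_nonneg _)) (hq b)
          (abs_nonneg _) (by positivity)
    _ = cp * cq * |M a b| := by ring

end stmt1Q

end Aux

/-- For the batch algorithm playing, in each of the `l` consecutive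
blocks of `d` rounds, an orthonormal basis of `ℝ^d` measurable with respect to the noise
observed before the block, the regularized least-squares estimator after `t = l·d` rounds
satisfies `E[‖θ̂_t − θ*‖₂²] ≤ (d²/t²)·θ*ᵀW₀²θ* + (d²/t)·σ²`. -/
theorem stmt_1 {d : ℕ} (hd : 1 ≤ d) {Ω : Type*} [MeasurableSpace Ω]
    (P : Measure Ω) [IsProbabilityMeasure P]
    (θstar : Fin d → ℝ)
    (W0 : Matrix (Fin d) (Fin d) ℝ) (hW0 : W0.PosDef)
    (σ : ℝ)
    (η : ℕ → Ω → ℝ) (hηmeas : ∀ i, Measurable (η i))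
    (hindep : iIndepFun η P)
    (hident : ∀ i, IdentDistrib (η i) (η 0) P P)
    (hL1 : ∀ i, Integrable (η i) P)
    (hL2 : ∀ i, Integrable (fun ω => (η i ω) ^ 2) P)
    (hmean : ∀ i, ∫ ω, η i ω ∂P = 0)
    (hvar : ∀ i, ∫ ω, (η i ω) ^ 2 ∂P = σ ^ 2)
    (l : ℕ) (hl : 1 ≤ l)
    (x : ℕ → Ω → Fin d → ℝ)
    -- within every batch `k < l`, the `d` actions form an orthonormal basis of `ℝ^d` a.s.
    (horth : ∀ᵐ ω ∂P, ∀ k < l, ∀ j < d, ∀ j' < d,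
      x (k * d + j) ω ⬝ᵥ x (k * d + j') ω = if j = j' then (1 : ℝ) else 0)
    -- every action of batch `k` is measurable w.r.t. the σ-field generated by the noise
    -- of the previous batches, i.e. `F_{k·d} = σ(η₀, …, η_{k·d−1})`
    (hadapt : ∀ k < l, ∀ j < d, Measurable[MeasurableSpace.comap
      (fun ω => (fun i : Fin (k * d) => η (i : ℕ) ω)) inferInstance] (x (k * d + j)))
    (θhat : Ω → Fin d → ℝ)
    (hθhat : ∀ ω, θhat ω =
      (W0 + (Matrix.of fun (i : Fin (l * d)) j => x (i : ℕ) ω j)ᵀ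
          * (Matrix.of fun (i : Fin (l * d)) j => x (i : ℕ) ω j))⁻¹
        *ᵥ ((Matrix.of fun (i : Fin (l * d)) j => x (i : ℕ) ω j)ᵀ
          *ᵥ ((Matrix.of fun (i : Fin (l * d)) j => x (i : ℕ) ω j) *ᵥ θstar
              + fun i : Fin (l * d) => η (i : ℕ) ω))) :
    ∫ ω, (θhat ω - θstar) ⬝ᵥ (θhat ω - θstar) ∂P
      ≤ ((d : ℝ) ^ 2 / ((l * d : ℕ) : ℝ) ^ 2) * (θstar ⬝ᵥ ((W0 * W0) *ᵥ θstar))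
        + ((d : ℝ) ^ 2 / ((l * d : ℕ) : ℝ)) * σ ^ 2 := by
  classical
  have hd0 : 0 < d := hd
  have hl0 : 0 < l := hl
  have hdR : (0:ℝ) < d := by exact_mod_cast hd0
  have hlR : (0:ℝ) < l := by exact_mod_cast hl0
  -- the deterministic Gram matrix
  set W : Matrix (Fin d) (Fin d) ℝ := W0 + (l:ℝ) • 1 with hWdef
  have hlow : ∀ u : Fin d → ℝ, (l:ℝ) * (u ⬝ᵥ u) ≤ u ⬝ᵥ (W *ᵥ u) := by
    intro u
    have h1 : u ⬝ᵥ (W *ᵥ u) = u ⬝ᵥ (W0 *ᵥ u) + (l:ℝ) * (u ⬝ᵥ u) := by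
      rw [hWdef, add_mulVec, dotProduct_add, smul_mulVec, one_mulVec,
        dotProduct_smul, smul_eq_mul]
    have h2 : (0:ℝ) ≤ u ⬝ᵥ (W0 *ᵥ u) := by
      have := (posSemidef_iff_dotProduct_mulVec.mp hW0.posSemidef).2 u
      simpa using this
    linarith
  have hWpd : W.PosDef := by
    refine posDef_iff_dotProduct_mulVec.mpr ⟨hW0.1.add ?_, fun u hu => ?_⟩
    · unfold Matrix.IsHermitian
      ext a b
      simp [Matrix.one_apply, eq_comm]
    · have h2 : (0:ℝ) < star u ⬝ᵥ (W0 *ᵥ u) := (posDef_iff_dotProduct_mulVec.mp hW0).2 hu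
      have h1 : star u ⬝ᵥ (W *ᵥ u)
          = star u ⬝ᵥ (W0 *ᵥ u) + (l:ℝ) * (star u ⬝ᵥ u) := by
        rw [hWdef, add_mulVec, dotProduct_add, smul_mulVec, one_mulVec,
          dotProduct_smul, smul_eq_mul]
      have h3 : (0:ℝ) ≤ star u ⬝ᵥ u := by
        simp only [star_trivial]
        exact Finset.sum_nonneg fun i _ => mul_self_nonneg _
      rw [h1]
      positivity
  have hWdet : IsUnit W.det := hWpd.det_pos.ne'.isUnit
  set V : Matrix (Fin d) (Fin d) ℝ := W⁻¹ with hVdef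
  set M : Matrix (Fin d) (Fin d) ℝ := Vᵀ * V with hMdef
  set c : Fin d → ℝ := W0 *ᵥ θstar with hcdef
  have hop : ∀ v : Fin d → ℝ, (l:ℝ)^2 * ((V *ᵥ v) ⬝ᵥ (V *ᵥ v)) ≤ v ⬝ᵥ v :=
    fun v => stmt1_hop hl hlow hWdet v
  have hQform : ∀ v : Fin d → ℝ, stmt1Q M v v = (V *ᵥ v) ⬝ᵥ (V *ᵥ v) := by
    intro v
    rw [← stmt1Q.eq', hMdef, ← stmt1_dot_self_trans]
  -- the filtration
  set F : ℕ → MeasurableSpace Ω :=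
    fun n => ⨆ i ∈ {i : ℕ | i < n}, MeasurableSpace.comap (η i) inferInstance with hFdef
  have hFle : ∀ n, F n ≤ ‹MeasurableSpace Ω› := by
    intro n
    exact iSup₂_le fun i _ => (hηmeas i).comap_le
  have hFmono : ∀ {m n : ℕ}, m ≤ n → F m ≤ F n := by
    intro m n hmn
    exact biSup_mono fun i hi => lt_of_lt_of_le hi hmn
  have hηF : ∀ {m n : ℕ}, m < n → Measurable[F n] (η m) := by
    intro m n hmn
    have h0 : Measurable[MeasurableSpace.comap (η m) inferInstance] (η m) :=
      measurable_iff_comap_le.mpr le_rfl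
    exact h0.mono (le_biSup (fun i => MeasurableSpace.comap (η i) inferInstance) hmn) le_rfl
  have htuple : ∀ p n : ℕ, p ≤ n →
      MeasurableSpace.comap (fun ω => (fun i : Fin p => η (i:ℕ) ω)) inferInstance ≤ F n := by
    intro p n h
    have h0 : (inferInstance : MeasurableSpace (Fin p → ℝ)) = ⨆ a : Fin p,
        (inferInstance : MeasurableSpace ℝ).comap (fun f => f a) := rfl
    rw [h0, MeasurableSpace.comap_iSup]
    refine iSup_le fun a => ?_
    rw [MeasurableSpace.comap_comp]
    have ha : (a : ℕ) ∈ {i : ℕ | i < n} := lt_of_lt_of_le a.2 h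
    exact le_biSup (fun i => MeasurableSpace.comap (η i) inferInstance) ha
  -- measurability of the actions
  have hxF : ∀ i, i < l * d → ∀ n, i ≤ n → Measurable[F n] (x i) := by
    intro i hi n hin
    have hk : i / d < l := (Nat.div_lt_iff_lt_mul hd0).mpr hi
    have hj : i % d < d := Nat.mod_lt _ hd0
    have heq : i / d * d + i % d = i := by rw [mul_comm]; exact Nat.div_add_mod i d
    have hm := hadapt (i / d) hk (i % d) hj
    rw [heq] at hm
    exact hm.mono (htuple _ n ((Nat.div_mul_le_self i d).trans hin)) le_rfl
  have hxm : ∀ i, i < l * d → Measurable (x i) := by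
    intro i hi
    exact (hxF i hi i le_rfl).mono (hFle i) le_rfl
  -- Independence of F n-measurable functions from η n
  have hZind : ∀ (n : ℕ) (Z : Ω → ℝ), Measurable[F n] Z → IndepFun Z (η n) P := by
    intro n Z hZ
    have h1 : Indep (F n)
        (⨆ i ∈ ({n} : Set ℕ), MeasurableSpace.comap (η i) inferInstance) P :=
      indep_iSup_of_disjoint (fun i => (hηmeas i).comap_le) hindep.iIndep
        (by simp only [Set.disjoint_left, Set.mem_setOf_eq, Set.mem_singleton_iff]; omega)
    simp only [Set.mem_singleton_iff, iSup_iSup_eq_left] at h1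
    exact indep_of_indep_of_le_left h1 (measurable_iff_comap_le.1 hZ)
  have hzero : ∀ (n : ℕ) (Z : Ω → ℝ), Measurable[F n] Z →
      ∫ ω, Z ω * η n ω ∂P = 0 := by
    intro n Z hZ
    have hind := hZind n Z hZ
    have hZa : AEStronglyMeasurable Z P :=
      ((hZ.mono (hFle n) le_rfl)).aestronglyMeasurable
    rw [hind.integral_fun_mul_eq_mul_integral hZa (hηmeas n).aestronglyMeasurable, hmean n, mul_zero]
  have hsig : ∀ (n : ℕ) (Z : Ω → ℝ), Measurable[F n] Z →
      ∫ ω, Z ω * (η n ω * η n ω) ∂P = (∫ ω, Z ω ∂P) * σ ^ 2 := by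
    intro n Z hZ
    have hind := (hZind n Z hZ).comp measurable_id (measurable_id.mul measurable_id)
    have hZa : AEStronglyMeasurable Z P :=
      ((hZ.mono (hFle n) le_rfl)).aestronglyMeasurable
    have h2 : ∫ ω, η n ω * η n ω ∂P = σ ^ 2 := by
      rw [← hvar n]
      exact integral_congr_ae (Filter.Eventually.of_forall fun ω => by ring)
    have h1 := hind.integral_fun_mul_eq_mul_integral hZa ((hηmeas n).mul (hηmeas n)).aestronglyMeasurable
    simpa [Function.comp_def, h2] using h1
  -- a.e. bounds on entries of x
  have hbox : ∀ᵐ ω ∂P, ∀ i < l * d, (x i ω ⬝ᵥ x i ω = 1 ∧ ∀ a, |x i ω a| ≤ 1) := by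
    filter_upwards [horth] with ω hω
    intro i hi
    have hk : i / d < l := (Nat.div_lt_iff_lt_mul hd0).mpr hi
    have hj : i % d < d := Nat.mod_lt _ hd0
    have heq : i / d * d + i % d = i := by rw [mul_comm]; exact Nat.div_add_mod i d
    have h1 := hω (i / d) hk (i % d) hj (i % d) hj
    rw [heq, if_pos rfl] at h1
    refine ⟨h1, fun a => ?_⟩
    rw [abs_le_one_iff_mul_self_le_one]
    calc x i ω a * x i ω a ≤ ∑ b : Fin d, x i ω b * x i ω b :=
          Finset.single_le_sum (f := fun b => x i ω b * x i ω b)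
            (fun b _ => mul_self_nonneg _) (Finset.mem_univ a)
      _ = 1 := h1
  -- a.e. the Gram identity
  have hXX : ∀ᵐ ω ∂P, ∀ a b : Fin d,
      ∑ i ∈ Finset.range (l * d), x i ω a * x i ω b = if a = b then (l:ℝ) else 0 := by
    filter_upwards [horth] with ω hω
    intro a b
    rw [stmt1_sum_range_mul (fun i => x i ω a * x i ω b) l d]
    have hba : ∀ k ∈ Finset.range l,
        ∑ j ∈ Finset.range d, x (k * d + j) ω a * x (k * d + j) ω b
          = if a = b then (1:ℝ) else 0 := by
      intro k hk
      rw [Finset.mem_range] at hk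
      have h2 : ∀ j j' : Fin d,
          (fun j : Fin d => x (k * d + (j:ℕ)) ω) j ⬝ᵥ (fun j : Fin d => x (k * d + (j:ℕ)) ω) j'
            = if j = j' then (1:ℝ) else 0 := by
        intro j j'
        have := hω k hk (j:ℕ) j.2 (j':ℕ) j'.2
        rw [this]
        simp [Fin.ext_iff]
      have h3 := stmt1_batch_sum (fun j : Fin d => x (k * d + (j:ℕ)) ω) h2 a b
      rw [← h3]
      exact (Fin.sum_univ_eq_sum_range (fun j => x (k * d + j) ω a * x (k * d + j) ω b) d).symm
    rw [Finset.sum_congr rfl hba]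
    simp [Finset.sum_ite_eq, Finset.mul_sum]
  -- notation for the noise part of the least-squares deviation
  have hW0symm : W0ᵀ = W0 := by
    have h := hW0.1
    ext a b
    calc W0ᵀ a b = W0 b a := rfl
      _ = star (W0 b a) := (star_trivial _).symm
      _ = W0ᴴ a b := rfl
      _ = W0 a b := by rw [h]
  -- a.e. identity for the deviation of the estimator
  have hdiff : ∀ᵐ ω ∂P, θhat ω - θstar
      = V *ᵥ ((fun a => ∑ i ∈ Finset.range (l * d), η i ω * x i ω a) - c) := by
    filter_upwards [hXX] with ω hXXω
    have hGram : (Matrix.of fun (i : Fin (l * d)) j => x (i : ℕ) ω j)ᵀ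
        * (Matrix.of fun (i : Fin (l * d)) j => x (i : ℕ) ω j)
        = (l:ℝ) • (1 : Matrix (Fin d) (Fin d) ℝ) := by
      ext a b
      rw [Matrix.mul_apply]
      have hentry : ∀ i : Fin (l * d),
          (Matrix.of fun (i : Fin (l * d)) j => x (i : ℕ) ω j)ᵀ a i
            * (Matrix.of fun (i : Fin (l * d)) j => x (i : ℕ) ω j) i b
          = x (i:ℕ) ω a * x (i:ℕ) ω b := fun i => rfl
      rw [Finset.sum_congr rfl (fun i _ => hentry i),
        Fin.sum_univ_eq_sum_range (fun i => x i ω a * x i ω b) (l * d), hXXω a b]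
      simp [Matrix.smul_apply, Matrix.one_apply, mul_ite]
    have hθ := hθhat ω
    rw [mulVec_add, mulVec_mulVec, hGram, ← hWdef] at hθ
    have hθs : V *ᵥ (W *ᵥ θstar) = θstar := by
      rw [hVdef, mulVec_mulVec, Matrix.nonsing_inv_mul W hWdet, one_mulVec]
    rw [hθ]
    have key : W⁻¹ *ᵥ (((l:ℝ) • (1 : Matrix (Fin d) (Fin d) ℝ)) *ᵥ θstar
          + (Matrix.of fun (i : Fin (l * d)) j => x (i : ℕ) ω j)ᵀ
            *ᵥ (fun i : Fin (l * d) => η (i:ℕ) ω))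
        - θstar
        = W⁻¹ *ᵥ ((((l:ℝ) • (1 : Matrix (Fin d) (Fin d) ℝ)) *ᵥ θstar
          + (Matrix.of fun (i : Fin (l * d)) j => x (i : ℕ) ω j)ᵀ
            *ᵥ (fun i : Fin (l * d) => η (i:ℕ) ω))
          - W *ᵥ θstar) := by
      rw [mulVec_sub]
      have h2 : W⁻¹ *ᵥ (W *ᵥ θstar) = θstar := hθs
      rw [h2]
    rw [key, hVdef]
    have harg : (((l:ℝ) • (1 : Matrix (Fin d) (Fin d) ℝ)) *ᵥ θstar
          + (Matrix.of fun (i : Fin (l * d)) j => x (i : ℕ) ω j)ᵀ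
            *ᵥ (fun i : Fin (l * d) => η (i:ℕ) ω))
          - W *ᵥ θstar
        = (fun a => ∑ i ∈ Finset.range (l * d), η i ω * x i ω a) - c := by
      funext a
      have hWts : (W *ᵥ θstar) a = c a + (((l:ℝ) • (1 : Matrix (Fin d) (Fin d) ℝ)) *ᵥ θstar) a := by
        rw [hWdef, add_mulVec]
        rfl
      have hTe : ((Matrix.of fun (i : Fin (l * d)) j => x (i : ℕ) ω j)ᵀ
          *ᵥ (fun i : Fin (l * d) => η (i : ℕ) ω)) a
          = ∑ i ∈ Finset.range (l * d), η i ω * x i ω a := by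
        have h1 : ((Matrix.of fun (i : Fin (l * d)) j => x (i : ℕ) ω j)ᵀ
            *ᵥ (fun i : Fin (l * d) => η (i : ℕ) ω)) a
            = ∑ i : Fin (l * d), x (i:ℕ) ω a * η (i:ℕ) ω := rfl
        rw [h1, Fin.sum_univ_eq_sum_range (fun i => x i ω a * η i ω) (l * d)]
        exact Finset.sum_congr rfl fun i _ => by ring
      simp only [Pi.add_apply, Pi.sub_apply, hWts, hTe]
      ring
    rw [harg]
  -- a.e. expansion of the squared deviation
  have hexp : ∀ᵐ ω ∂P, (θhat ω - θstar) ⬝ᵥ (θhat ω - θstar)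
      = (∑ i ∈ Finset.range (l * d), ∑ i' ∈ Finset.range (l * d),
            η i ω * η i' ω * stmt1Q M (x i ω) (x i' ω))
        - (∑ i ∈ Finset.range (l * d),
            η i ω * (stmt1Q M (x i ω) c + stmt1Q M c (x i ω)))
        + stmt1Q M c c := by
    filter_upwards [hdiff] with ω hdω
    rw [hdω, ← hQform, stmt1Q.sub_sub]
    have hss : stmt1Q M (fun a => ∑ i ∈ Finset.range (l * d), η i ω * x i ω a)
        (fun a => ∑ i ∈ Finset.range (l * d), η i ω * x i ω a)
        = ∑ i ∈ Finset.range (l * d), ∑ i' ∈ Finset.range (l * d),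
            η i ω * η i' ω * stmt1Q M (x i ω) (x i' ω) := by
      rw [stmt1Q.sum_left M (l * d) (fun i => η i ω) (fun i => x i ω)]
      refine Finset.sum_congr rfl fun i _ => ?_
      rw [stmt1Q.sum_right M (l * d) (fun i => η i ω) (fun i => x i ω), Finset.mul_sum]
      exact Finset.sum_congr rfl fun i' _ => by ring
    have hsc : stmt1Q M (fun a => ∑ i ∈ Finset.range (l * d), η i ω * x i ω a) c
        = ∑ i ∈ Finset.range (l * d), η i ω * stmt1Q M (x i ω) c :=
      stmt1Q.sum_left M (l * d) (fun i => η i ω) (fun i => x i ω) c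
    have hcs : stmt1Q M c (fun a => ∑ i ∈ Finset.range (l * d), η i ω * x i ω a)
        = ∑ i ∈ Finset.range (l * d), η i ω * stmt1Q M c (x i ω) :=
      stmt1Q.sum_right M (l * d) (fun i => η i ω) (fun i => x i ω) c
    have hadd : ∑ i ∈ Finset.range (l * d),
        η i ω * (stmt1Q M (x i ω) c + stmt1Q M c (x i ω))
        = (∑ i ∈ Finset.range (l * d), η i ω * stmt1Q M (x i ω) c)
          + ∑ i ∈ Finset.range (l * d), η i ω * stmt1Q M c (x i ω) := by
      rw [← Finset.sum_add_distrib]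
      exact Finset.sum_congr rfl fun i _ => by ring
    rw [hss, hsc, hcs, hadd]
    ring
  -- bounds
  set CB : ℝ := ∑ a : Fin d, ∑ b : Fin d, |M a b| with hCBdef
  set Cc : ℝ := ∑ a : Fin d, |c a| with hCcdef
  have hCc0 : 0 ≤ Cc := Finset.sum_nonneg fun a _ => abs_nonneg _
  have hCcb : ∀ a, |c a| ≤ Cc := fun a =>
    Finset.single_le_sum (f := fun a => |c a|) (fun b _ => abs_nonneg _) (Finset.mem_univ a)
  have hσnn : 0 ≤ σ ^ 2 := by
    rw [← hvar 0]
    exact integral_nonneg fun ω => sq_nonneg _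
  -- integrability of all summands
  have hterm_int : ∀ i < l * d, ∀ i' < l * d,
      Integrable (fun ω => η i ω * η i' ω * stmt1Q M (x i ω) (x i' ω)) P := by
    intro i hi i' hi'
    have hg : Integrable (fun ω => η i ω * η i' ω) P := by
      rcases eq_or_ne i i' with rfl | hne
      · exact (hL2 i).congr (Filter.Eventually.of_forall fun ω => by ring)
      · exact (hindep.indepFun hne).integrable_mul (hL1 i) (hL1 i')
    have hQm : Measurable (fun ω => stmt1Q M (x i ω) (x i' ω)) :=
      stmt1Q.measurable M (hxm i hi) (hxm i' hi')
    have hbd : ∀ᵐ ω ∂P, ‖stmt1Q M (x i ω) (x i' ω)‖ ≤ 1 * 1 * CB := by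
      filter_upwards [hbox] with ω hb
      rw [Real.norm_eq_abs]
      exact stmt1Q.abs_le M zero_le_one zero_le_one (hb i hi).2 (hb i' hi').2
    exact (hg.bdd_mul hQm.aestronglyMeasurable hbd).congr
      (Filter.Eventually.of_forall fun ω => by ring)
  have hlin_int : ∀ i < l * d,
      Integrable (fun ω =>
        η i ω * (stmt1Q M (x i ω) c + stmt1Q M c (x i ω))) P := by
    intro i hi
    have hQm : Measurable (fun ω => stmt1Q M (x i ω) c + stmt1Q M c (x i ω)) :=
      (stmt1Q.measurable M (hxm i hi) measurable_const).add
        (stmt1Q.measurable M measurable_const (hxm i hi))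
    have hbd : ∀ᵐ ω ∂P, ‖stmt1Q M (x i ω) c + stmt1Q M c (x i ω)‖
        ≤ 1 * Cc * CB + Cc * 1 * CB := by
      filter_upwards [hbox] with ω hb
      refine (norm_add_le _ _).trans ?_
      rw [Real.norm_eq_abs, Real.norm_eq_abs]
      exact add_le_add
        (stmt1Q.abs_le M zero_le_one hCc0 (hb i hi).2 hCcb)
        (stmt1Q.abs_le M hCc0 zero_le_one hCcb (hb i hi).2)
    exact ((hL1 i).bdd_mul hQm.aestronglyMeasurable hbd).congr
      (Filter.Eventually.of_forall fun ω => by ring)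
  have hint1 : Integrable (fun ω => ∑ i ∈ Finset.range (l * d), ∑ i' ∈ Finset.range (l * d),
      η i ω * η i' ω * stmt1Q M (x i ω) (x i' ω)) P :=
    integrable_finset_sum _ fun i hi => integrable_finset_sum _ fun i' hi' =>
      hterm_int i (Finset.mem_range.mp hi) i' (Finset.mem_range.mp hi')
  have hint2 : Integrable (fun ω => ∑ i ∈ Finset.range (l * d),
      η i ω * (stmt1Q M (x i ω) c + stmt1Q M c (x i ω))) P :=
    integrable_finset_sum _ fun i hi => hlin_int i (Finset.mem_range.mp hi)
  -- splitting the integral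
  have hsplit : ∫ ω, (θhat ω - θstar) ⬝ᵥ (θhat ω - θstar) ∂P
      = (∑ i ∈ Finset.range (l * d), ∑ i' ∈ Finset.range (l * d),
          ∫ ω, η i ω * η i' ω * stmt1Q M (x i ω) (x i' ω) ∂P)
        - (∑ i ∈ Finset.range (l * d),
          ∫ ω, η i ω * (stmt1Q M (x i ω) c + stmt1Q M c (x i ω)) ∂P)
        + stmt1Q M c c := by
    have hint12 : Integrable (fun ω =>
        (∑ i ∈ Finset.range (l * d), ∑ i' ∈ Finset.range (l * d),
          η i ω * η i' ω * stmt1Q M (x i ω) (x i' ω))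
        - ∑ i ∈ Finset.range (l * d),
          η i ω * (stmt1Q M (x i ω) c + stmt1Q M c (x i ω))) P := hint1.sub hint2
    rw [integral_congr_ae hexp, integral_add hint12 (integrable_const _),
      integral_sub hint1 hint2, integral_const]
    rw [integral_finset_sum _ (fun i hi => integrable_finset_sum _ fun i' hi' =>
      hterm_int i (Finset.mem_range.mp hi) i' (Finset.mem_range.mp hi')),
      integral_finset_sum _ (fun i hi => hlin_int i (Finset.mem_range.mp hi))]
    simp only [probReal_univ, measure_univ, ENNReal.toReal_one, one_smul]
    congr 1
    congr 1
    exact Finset.sum_congr rfl fun i hi => integral_finset_sum _ fun i' hi' =>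
      hterm_int i (Finset.mem_range.mp hi) i' (Finset.mem_range.mp hi')
  -- vanishing of the linear terms
  have hlin_zero : ∀ i < l * d,
      ∫ ω, η i ω * (stmt1Q M (x i ω) c + stmt1Q M c (x i ω)) ∂P = 0 := by
    intro i hi
    have hZm : Measurable[F i] (fun ω => stmt1Q M (x i ω) c + stmt1Q M c (x i ω)) :=
      (stmt1Q.measurable M (hxF i hi i le_rfl) measurable_const).add
        (stmt1Q.measurable M measurable_const (hxF i hi i le_rfl))
    have h0 := hzero i _ hZm
    rw [← h0]
    exact integral_congr_ae (Filter.Eventually.of_forall fun ω => by ring)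
  -- vanishing of the off-diagonal terms
  have hcross : ∀ i < l * d, ∀ i' < l * d, i ≠ i' →
      ∫ ω, η i ω * η i' ω * stmt1Q M (x i ω) (x i' ω) ∂P = 0 := by
    intro i hi i' hi' hne
    rcases hne.lt_or_gt with hlt | hlt
    · have hZm : Measurable[F i'] (fun ω => η i ω * stmt1Q M (x i ω) (x i' ω)) :=
        (hηF hlt).mul (stmt1Q.measurable M (hxF i hi i' hlt.le) (hxF i' hi' i' le_rfl))
      have h0 := hzero i' _ hZm
      rw [← h0]
      exact integral_congr_ae (Filter.Eventually.of_forall fun ω => by ring)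
    · have hZm : Measurable[F i] (fun ω => η i' ω * stmt1Q M (x i ω) (x i' ω)) :=
        (hηF hlt).mul (stmt1Q.measurable M (hxF i hi i le_rfl) (hxF i' hi' i hlt.le))
      have h0 := hzero i _ hZm
      rw [← h0]
      exact integral_congr_ae (Filter.Eventually.of_forall fun ω => by ring)
  -- the diagonal terms
  have hdiag_le : ∀ i < l * d,
      ∫ ω, η i ω * η i ω * stmt1Q M (x i ω) (x i ω) ∂P ≤ 1 / (l:ℝ)^2 * σ ^ 2 := by
    intro i hi
    have hZm : Measurable[F i] (fun ω => stmt1Q M (x i ω) (x i ω)) :=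
      stmt1Q.measurable M (hxF i hi i le_rfl) (hxF i hi i le_rfl)
    have hval := hsig i _ hZm
    have heq : ∫ ω, η i ω * η i ω * stmt1Q M (x i ω) (x i ω) ∂P
        = (∫ ω, stmt1Q M (x i ω) (x i ω) ∂P) * σ ^ 2 := by
      rw [← hval]
      exact integral_congr_ae (Filter.Eventually.of_forall fun ω => by ring)
    rw [heq]
    have hQm : Measurable (fun ω => stmt1Q M (x i ω) (x i ω)) :=
      stmt1Q.measurable M (hxm i hi) (hxm i hi)
    have hQint : Integrable (fun ω => stmt1Q M (x i ω) (x i ω)) P := by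
      refine (integrable_const (1 * 1 * CB)).mono' hQm.aestronglyMeasurable ?_
      filter_upwards [hbox] with ω hb
      rw [Real.norm_eq_abs]
      exact stmt1Q.abs_le M zero_le_one zero_le_one (hb i hi).2 (hb i hi).2
    have hub : ∀ᵐ ω ∂P, stmt1Q M (x i ω) (x i ω) ≤ 1 / (l:ℝ)^2 := by
      filter_upwards [hbox] with ω hb
      have h1 := hop (x i ω)
      have h2 := (hb i hi).1
      rw [hQform, le_div_iff₀ (by positivity : (0:ℝ) < (l:ℝ)^2)]
      nlinarith
    have hile : ∫ ω, stmt1Q M (x i ω) (x i ω) ∂P ≤ 1 / (l:ℝ)^2 := by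
      have := integral_mono_ae hQint (integrable_const _) hub
      simpa [measure_univ] using this
    exact mul_le_mul_of_nonneg_right hile hσnn
  -- bound on the constant term
  have hl2pos : (0:ℝ) < (l:ℝ)^2 := by positivity
  have hK : stmt1Q M c c ≤ (θstar ⬝ᵥ ((W0 * W0) *ᵥ θstar)) / (l:ℝ)^2 := by
    have h1 : (l:ℝ)^2 * ((V *ᵥ c) ⬝ᵥ (V *ᵥ c)) ≤ c ⬝ᵥ c := hop c
    have h2 : c ⬝ᵥ c = θstar ⬝ᵥ ((W0 * W0) *ᵥ θstar) := by
      rw [hcdef, stmt1_dot_self_trans W0 θstar, hW0symm]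
    rw [hQform, le_div_iff₀ hl2pos]
    nlinarith
  -- putting everything together
  rw [hsplit]
  have hsum2 : ∑ i ∈ Finset.range (l * d),
      ∫ ω, η i ω * (stmt1Q M (x i ω) c + stmt1Q M c (x i ω)) ∂P = 0 :=
    Finset.sum_eq_zero fun i hi => hlin_zero i (Finset.mem_range.mp hi)
  have hsum1 : ∑ i ∈ Finset.range (l * d), ∑ i' ∈ Finset.range (l * d),
      ∫ ω, η i ω * η i' ω * stmt1Q M (x i ω) (x i' ω) ∂P
      ≤ (l * d : ℕ) * (1 / (l:ℝ)^2 * σ ^ 2) := by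
    have hinner : ∀ i ∈ Finset.range (l * d),
        ∑ i' ∈ Finset.range (l * d),
          ∫ ω, η i ω * η i' ω * stmt1Q M (x i ω) (x i' ω) ∂P
        = ∫ ω, η i ω * η i ω * stmt1Q M (x i ω) (x i ω) ∂P := by
      intro i hi
      exact Finset.sum_eq_single_of_mem i hi fun i' hi' hne =>
        hcross i (Finset.mem_range.mp hi) i' (Finset.mem_range.mp hi') (Ne.symm hne)
    rw [Finset.sum_congr rfl hinner]
    have := Finset.sum_le_card_nsmul (Finset.range (l * d))
      (fun i => ∫ ω, η i ω * η i ω * stmt1Q M (x i ω) (x i ω) ∂P)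
      (1 / (l:ℝ)^2 * σ ^ 2)
      (fun i hi => hdiag_le i (Finset.mem_range.mp hi))
    simpa [Finset.card_range, nsmul_eq_mul] using this
  rw [hsum2, sub_zero]
  have hfinal := add_le_add hsum1 hK
  refine hfinal.trans (le_of_eq ?_)
  have hcast : ((l * d : ℕ) : ℝ) = (l:ℝ) * (d:ℝ) := by push_cast; ring
  rw [hcast]
  have hdne : (d:ℝ) ≠ 0 := ne_of_gt hdR
  have hlne : (l:ℝ) ≠ 0 := ne_of_gt hlR
  field_simp
  ring
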